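/- arXiv:1207.6667 — 5 statements merged into one kernel-verified Lean document; each statement's English description precedes it below -/
import Mathlib

section
/- The first-best contract menu is not incentive compatible: let c > 0, 2c·ln 2 < θ̲ < θ̄, and define γ_fb(θ) = θ/(2c·ln 2) − 1 and t_fb(θ) = 1/(2·ln 2) − c/θ on [θ̲, θ̄]. Then for every type θ ∈ (θ̲, θ̄] there exists an announced type θ̂ ∈ [θ̲, θ) such that t_fb(θ̂) − c·γ_fb(θ̂)/θ > t_fb(θ) − c·γ_fb(θ)/θ, i.e., type θ strictly profits from misreporting a lower type. -/
/-- The first-best contract menu `γ_fb(θ) = θ/(2c·ln 2) − 1`,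
`t_fb(θ) = 1/(2·ln 2) − c/θ` on `[θ̲, θ̄]` is not incentive compatible:
every type `θ ∈ (θ̲, θ̄]` strictly profits from misreporting some lower
type `θ̂ ∈ [θ̲, θ)`. -/
theorem first_best_not_incentive_compatible
    (c θl θh : ℝ) (hc : 0 < c) (hl : 2 * c * Real.log 2 < θl) (hlh : θl < θh)
    (γfb tfb : ℝ → ℝ)
    (hγfb : ∀ θ, γfb θ = θ / (2 * c * Real.log 2) - 1)
    (htfb : ∀ θ, tfb θ = 1 / (2 * Real.log 2) - c / θ) :
    ∀ θ ∈ Set.Ioc θl θh, ∃ θhat ∈ Set.Ico θl θ,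
      tfb θhat - c * γfb θhat / θ > tfb θ - c * γfb θ / θ := by
  intro θ hθ
  have hL : 0 < Real.log 2 := Real.log_pos (by norm_num)
  have hθl : 0 < θl := lt_trans (by positivity) hl
  have hθpos : 0 < θ := lt_trans hθl hθ.1
  refine ⟨θl, ⟨le_refl θl, hθ.1⟩, ?_⟩
  rw [hγfb, hγfb, htfb, htfb]
  have h1 : θl < θ := hθ.1
  field_simp
  nlinarith [mul_pos (mul_pos (mul_pos (sub_pos.mpr h1) (sub_pos.mpr hl))
      (mul_pos (mul_pos hc hc) (mul_pos hL (mul_pos hL hL))))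
      (mul_pos hθpos hθpos)]
end

section
/- Integral formula for the transfers: let γ, t : [θ̲, θ̄] → ℝ be continuously differentiable, satisfy t′(θ) = (c/θ)·γ′(θ) on (θ̲, θ̄), and satisfy the binding participation constraint at the lowest type, t(θ̲) − c·γ(θ̲)/θ̲ = 0. Then for every θ ∈ [θ̲, θ̄], t(θ) = c·γ(θ)/θ + ∫_{θ̲}^{θ} c·γ(τ)/τ² dτ. -/
open intervalIntegral

/-- Integral formula for the transfers: if `γ, t` are continuously
differentiable on `[θ̲, θ̄]`, satisfy the first-order incentive condition
`t′(θ) = (c/θ)·γ′(θ)` on the interior, and the participation constraint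
binds at the lowest type (`t(θ̲) = c·γ(θ̲)/θ̲`), then
`t(θ) = c·γ(θ)/θ + ∫_{θ̲}^{θ} c·γ(τ)/τ² dτ` for every `θ ∈ [θ̲, θ̄]`. -/
theorem transfer_integral_formula
    (c θl θh : ℝ) (hc : 0 < c) (hθl : 0 < θl) (hlh : θl < θh)
    (γ t : ℝ → ℝ)
    (hγ : ContDiffOn ℝ 1 γ (Set.Icc θl θh))
    (ht : ContDiffOn ℝ 1 t (Set.Icc θl θh))
    (hFOC : ∀ θ ∈ Set.Ioo θl θh, deriv t θ = (c / θ) * deriv γ θ)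
    (hIRbind : t θl - c * γ θl / θl = 0) :
    ∀ θ ∈ Set.Icc θl θh,
      t θ = c * γ θ / θ + ∫ τ in θl..θ, c * γ τ / τ ^ 2 := by
  intro θ hθ
  set f : ℝ → ℝ := fun x => t x - c * γ x / x with hf
  have hγc : ContinuousOn γ (Set.Icc θl θh) := hγ.continuousOn
  have htc : ContinuousOn t (Set.Icc θl θh) := ht.continuousOn
  have hfc : ContinuousOn f (Set.Icc θl θh) := by
    apply htc.sub
    apply ContinuousOn.div (continuousOn_const.mul hγc) continuousOn_id
    intro x hx; exact ne_of_gt (lt_of_lt_of_le hθl hx.1)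
  have hderiv : ∀ x ∈ Set.Ioo θl θh, HasDerivAt f (c * γ x / x ^ 2) x := by
    intro x hx
    have hxne : x ≠ 0 := ne_of_gt (lt_of_lt_of_le hθl hx.1.le)
    have hmem : Set.Icc θl θh ∈ nhds x :=
      Icc_mem_nhds hx.1 hx.2
    have hdt : DifferentiableAt ℝ t x :=
      ((ht.differentiableOn one_ne_zero) x (Set.Ioo_subset_Icc_self hx)).differentiableAt hmem
    have hdγ : DifferentiableAt ℝ γ x :=
      ((hγ.differentiableOn one_ne_zero) x (Set.Ioo_subset_Icc_self hx)).differentiableAt hmem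
    have h1 : HasDerivAt t (deriv t x) x := hdt.hasDerivAt
    have h2 : HasDerivAt (fun y => c * γ y / y)
        ((c * deriv γ x * x - c * γ x * 1) / x ^ 2) x :=
      ((hdγ.hasDerivAt.const_mul c).div (hasDerivAt_id x) hxne)
    have h3 : HasDerivAt (fun y => t y - c * γ y / y)
        (deriv t x - (c * deriv γ x * x - c * γ x * 1) / x ^ 2) x := h1.sub h2
    convert h3 using 1
    rw [hFOC x hx]
    field_simp
    ring
  have hint : IntervalIntegrable (fun τ => c * γ τ / τ ^ 2) MeasureTheory.volume θl θ := by
    apply ContinuousOn.intervalIntegrable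
    apply ContinuousOn.div
    · exact continuousOn_const.mul (hγc.mono (by
        rw [Set.uIcc_of_le hθ.1]; exact Set.Icc_subset_Icc le_rfl hθ.2))
    · exact (continuousOn_id.pow 2)
    · intro x hx
      rw [Set.uIcc_of_le hθ.1] at hx
      exact pow_ne_zero 2 (ne_of_gt (lt_of_lt_of_le hθl hx.1))
  have key : ∫ τ in θl..θ, c * γ τ / τ ^ 2 = f θ - f θl := by
    apply integral_eq_sub_of_hasDerivAt_of_le hθ.1
      (hfc.mono (Set.Icc_subset_Icc le_rfl hθ.2))
      (fun x hx => hderiv x ⟨hx.1, lt_of_lt_of_le hx.2 hθ.2⟩) hint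
  have hfl : f θl = 0 := hIRbind
  have : f θ = ∫ τ in θl..θ, c * γ τ / τ ^ 2 := by rw [key, hfl, sub_zero]
  have := this
  simp only [hf] at this
  linarith
end

section
/- Bounds from binding adjacent incentive constraints: let c > 0, types 0 < δ₁ < ⋯ < δ_K, and let (γ_k, t_k) satisfy 0 ≤ γ₁ ≤ γ₂ ≤ ⋯ ≤ γ_K together with the binding downward adjacent incentive constraints t_k − t_{k−1} = c(γ_k − γ_{k−1})/δ_k for all k ≥ 2. Then for all indices j > k one has t_j − t_k ≤ c(γ_j − γ_k)/δ_k, and for all indices j < k one has t_k − t_j ≥ c(γ_k − γ_j)/δ_k. -/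
/-- Bounds from binding adjacent incentive constraints: if
`0 ≤ γ_0 ≤ ⋯ ≤ γ_{K-1}` and the downward adjacent incentive constraints
are binding, `t_k − t_{k−1} = c(γ_k − γ_{k−1})/δ_k`, then for `j > k`,
`t_j − t_k ≤ c(γ_j − γ_k)/δ_k`, and for `j < k`,
`t_k − t_j ≥ c(γ_k − γ_j)/δ_k`. -/
theorem binding_adjacent_IC_bounds
    (c : ℝ) (hc : 0 < c) (K : ℕ) (hK : 0 < K)
    (δ γ t : ℕ → ℝ)
    (hδpos : ∀ k, k < K → 0 < δ k)
    (hδmono : ∀ j k, j < k → k < K → δ j < δ k)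
    (hγ0 : ∀ k, k < K → 0 ≤ γ k)
    (hγmono : ∀ j k, j ≤ k → k < K → γ j ≤ γ k)
    (hbind : ∀ k, 1 ≤ k → k < K →
      t k - t (k - 1) = c * (γ k - γ (k - 1)) / δ k) :
    (∀ k j, k < j → j < K → t j - t k ≤ c * (γ j - γ k) / δ k) ∧
    (∀ k j, j < k → k < K → t k - t j ≥ c * (γ k - γ j) / δ k) := by
  constructor
  · intro k j hkj hjK
    induction j, hkj using Nat.le_induction with
    | base =>
      have hb := hbind (k + 1) (by omega) hjK
      simp only [Nat.add_sub_cancel] at hb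
      rw [hb]
      have hnum : 0 ≤ c * (γ (k + 1) - γ k) := by
        have := hγmono k (k + 1) (by omega) hjK
        nlinarith
      have h1 : 0 < δ k := hδpos k (by omega)
      have h2 : δ k ≤ δ (k + 1) := le_of_lt (hδmono k (k + 1) (by omega) hjK)
      exact div_le_div_of_nonneg_left hnum h1 h2
    | succ j hj ih =>
      have hI := ih (by omega)
      have hb := hbind (j + 1) (by omega) hjK
      simp only [Nat.add_sub_cancel] at hb
      have hnum : 0 ≤ c * (γ (j + 1) - γ j) := by
        have := hγmono j (j + 1) (by omega) hjK
        nlinarith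
      have h1 : 0 < δ k := hδpos k (by omega)
      have h2 : δ k ≤ δ (j + 1) := le_of_lt (hδmono k (j + 1) (by omega) hjK)
      have hstep : t (j + 1) - t j ≤ c * (γ (j + 1) - γ j) / δ k := by
        rw [hb]; exact div_le_div_of_nonneg_left hnum h1 h2
      have key : c * (γ (j + 1) - γ j) / δ k + c * (γ j - γ k) / δ k
          = c * (γ (j + 1) - γ k) / δ k := by ring
      linarith
  · intro k j hjk hkK
    induction k, hjk using Nat.le_induction with
    | base =>
      have hb := hbind (j + 1) (by omega) hkK
      simp only [Nat.add_sub_cancel] at hb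
      rw [hb]
    | succ k hk ih =>
      have hI := ih (by omega)
      have hb := hbind (k + 1) (by omega) hkK
      simp only [Nat.add_sub_cancel] at hb
      have hnum : 0 ≤ c * (γ k - γ j) := by
        have := hγmono j k (by omega) (by omega)
        nlinarith
      have h1 : 0 < δ k := hδpos k (by omega)
      have h2 : δ k ≤ δ (k + 1) := le_of_lt (hδmono k (k + 1) (by omega) hkK)
      have hmid : c * (γ k - γ j) / δ k ≥ c * (γ k - γ j) / δ (k + 1) :=
        div_le_div_of_nonneg_left hnum h1 h2
      have key : c * (γ (k + 1) - γ k) / δ (k + 1) + c * (γ k - γ j) / δ (k + 1)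
          = c * (γ (k + 1) - γ j) / δ (k + 1) := by ring
      linarith
end

section
/- (Theorem 2, sufficiency.) Let c > 0 and types 0 < δ₁ < ⋯ < δ_K. If a contract menu (γ_k, t_k) satisfies 0 ≤ γ₁ ≤ γ₂ ≤ ⋯ ≤ γ_K and all binding downward adjacent incentive constraints t_k − t_{k−1} = c(γ_k − γ_{k−1})/δ_k for k ≥ 2, then the menu is fully incentive compatible: t_k − cγ_k/δ_k ≥ t_j − cγ_j/δ_k for all pairs of indices k, j. -/
/-- Theorem 2, sufficiency: if `0 ≤ γ_0 ≤ ⋯ ≤ γ_{K-1}` and all the downward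
adjacent incentive constraints are binding,
`t_k − t_{k−1} = c(γ_k − γ_{k−1})/δ_k`, then the menu is fully incentive
compatible: `t_k − cγ_k/δ_k ≥ t_j − cγ_j/δ_k` for all `k, j`. -/
theorem binding_adjacent_IC_sufficient
    (c : ℝ) (hc : 0 < c) (K : ℕ) (hK : 0 < K)
    (δ γ t : ℕ → ℝ)
    (hδpos : ∀ k, k < K → 0 < δ k)
    (hδmono : ∀ j k, j < k → k < K → δ j < δ k)
    (hγ0 : ∀ k, k < K → 0 ≤ γ k)
    (hγmono : ∀ j k, j ≤ k → k < K → γ j ≤ γ k)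
    (hbind : ∀ k, 1 ≤ k → k < K →
      t k - t (k - 1) = c * (γ k - γ (k - 1)) / δ k) :
    ∀ k j, k < K → j < K →
      t k - c * γ k / δ k ≥ t j - c * γ j / δ k := by
  -- lower bound for upward telescoping
  have key1 : ∀ j k, j ≤ k → k < K → t k - t j ≥ c * (γ k - γ j) / δ k := by
    intro j k hjk
    induction k, hjk using Nat.le_induction with
    | base => intro hjK; simp
    | succ k hjk ih =>
      intro hkK
      have hkK' : k < K := Nat.lt_of_succ_lt hkK
      have hb := hbind (k + 1) (Nat.le_add_left 1 k) hkK
      simp only [Nat.add_sub_cancel] at hb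
      have hIH := ih hkK'
      have hδk := hδpos k hkK'
      have hδk1 := hδpos (k + 1) hkK
      have hδlt := hδmono k (k + 1) (Nat.lt_succ_self k) hkK
      have hγle := hγmono j k hjk hkK'
      have h1 : c * (γ k - γ j) / δ k ≥ c * (γ k - γ j) / δ (k + 1) :=
        div_le_div_of_nonneg_left (by nlinarith) hδk (le_of_lt hδlt)
      have : t (k + 1) - t j = c * (γ (k + 1) - γ k) / δ (k + 1) + (t k - t j) := by
        linarith
      rw [this]
      have : c * (γ (k + 1) - γ j) / δ (k + 1)
          = c * (γ (k + 1) - γ k) / δ (k + 1) + c * (γ k - γ j) / δ (k + 1) := by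
        field_simp; ring
      rw [this]
      linarith
  -- upper bound for downward telescoping
  have key2 : ∀ k j, k ≤ j → j < K → t j - t k ≤ c * (γ j - γ k) / δ (k + 1) := by
    intro k j hkj
    induction j, hkj using Nat.le_induction with
    | base => intro _; simp
    | succ j hkj ih =>
      intro hjK
      have hjK' : j < K := Nat.lt_of_succ_lt hjK
      have hb := hbind (j + 1) (Nat.le_add_left 1 j) hjK
      simp only [Nat.add_sub_cancel] at hb
      have hIH := ih hjK'
      have hδk1 : 0 < δ (k + 1) := hδpos (k + 1) (Nat.lt_of_le_of_lt (Nat.succ_le_succ hkj) hjK)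
      have hδj1 := hδpos (j + 1) hjK
      have hδle : δ (k + 1) ≤ δ (j + 1) := by
        rcases Nat.lt_or_ge (k + 1) (j + 1) with h | h
        · exact le_of_lt (hδmono _ _ h hjK)
        · have : k + 1 = j + 1 := le_antisymm (Nat.succ_le_succ hkj) h
          rw [this]
      have hγle : γ j ≤ γ (j + 1) := hγmono j (j + 1) (Nat.le_succ j) hjK
      have h1 : c * (γ (j + 1) - γ j) / δ (j + 1) ≤ c * (γ (j + 1) - γ j) / δ (k + 1) :=
        div_le_div_of_nonneg_left (by nlinarith) hδk1 hδle
      have h2 : t (j + 1) - t k = c * (γ (j + 1) - γ j) / δ (j + 1) + (t j - t k) := by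
        linarith
      rw [h2]
      have h3 : c * (γ (j + 1) - γ k) / δ (k + 1)
          = c * (γ (j + 1) - γ j) / δ (k + 1) + c * (γ j - γ k) / δ (k + 1) := by
        field_simp; ring
      rw [h3]
      linarith
  intro k j hkK hjK
  have hδk := hδpos k hkK
  have heq : c * (γ k - γ j) / δ k = c * γ k / δ k - c * γ j / δ k := by
    ring
  rcases le_or_gt j k with h | h
  · have := key1 j k h hkK
    linarith
  · have hk1K : k + 1 < K := Nat.lt_of_le_of_lt h hjK
    have h2 := key2 k j (le_of_lt h) hjK
    have hδlt := hδmono k (k + 1) (Nat.lt_succ_self k) hk1K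
    have hγle := hγmono k j (le_of_lt h) hjK
    have hδk1 := hδpos (k + 1) hk1K
    have h3 : c * (γ j - γ k) / δ (k + 1) ≤ c * (γ j - γ k) / δ k := by
      have := div_le_div_of_nonneg_left (show (0:ℝ) ≤ c * (γ j - γ k) by nlinarith) hδk (le_of_lt hδlt)
      linarith
    have : t j - t k ≤ c * (γ j - γ k) / δ k := le_trans h2 h3
    have heq2 : c * (γ j - γ k) / δ k = c * γ j / δ k - c * γ k / δ k := by
      ring
    linarith
end

section
/- (Theorem 2, necessity.) Let c > 0 and types 0 < δ₁ < ⋯ < δ_K, and let (γ_k, t_k) be an incentive compatible and individually rational contract menu with 0 ≤ γ₁ ≤ ⋯ ≤ γ_K such that for at least one index k ≥ 2 the downward adjacent incentive constraint is slack: t_k − cγ_k/δ_k > t_{k−1} − cγ_{k−1}/δ_k. Then there exists another contract menu (γ_k, t′_k) with the same SNRs that is incentive compatible and individually rational, satisfies t′_k ≤ t_k for all k with strict inequality for at least one k, and in which every downward adjacent incentive constraint is binding. In particular the original menu is not optimal for the source. -/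
/-- Theorem 2, necessity: if an IC and IR menu with `0 ≤ γ_0 ≤ ⋯ ≤ γ_{K-1}`
has a slack downward adjacent incentive constraint at some type, then there
is another IC and IR menu with the same SNRs, pointwise smaller transfers
(strictly smaller for at least one type), in which every downward adjacent
incentive constraint is binding; hence the original menu is not optimal. -/
theorem slack_adjacent_IC_not_optimal
    (c : ℝ) (hc : 0 < c) (K : ℕ) (hK : 0 < K)
    (δ γ t : ℕ → ℝ)
    (hδpos : ∀ k, k < K → 0 < δ k)
    (hδmono : ∀ j k, j < k → k < K → δ j < δ k)
    (hγ0 : ∀ k, k < K → 0 ≤ γ k)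
    (hγmono : ∀ j k, j ≤ k → k < K → γ j ≤ γ k)
    (hIC : ∀ k j, k < K → j < K →
      t k - c * γ k / δ k ≥ t j - c * γ j / δ k)
    (hIR : ∀ k, k < K → t k - c * γ k / δ k ≥ 0)
    (hslack : ∃ k, 1 ≤ k ∧ k < K ∧
      t k - c * γ k / δ k > t (k - 1) - c * γ (k - 1) / δ k) :
    ∃ t' : ℕ → ℝ,
      (∀ k j, k < K → j < K →
        t' k - c * γ k / δ k ≥ t' j - c * γ j / δ k) ∧
      (∀ k, k < K → t' k - c * γ k / δ k ≥ 0) ∧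
      (∀ k, k < K → t' k ≤ t k) ∧
      (∃ k, k < K ∧ t' k < t k) ∧
      (∀ k, 1 ≤ k → k < K →
        t' k - t' (k - 1) = c * (γ k - γ (k - 1)) / δ k) := by
  obtain ⟨m, hm1, hmK, hmslack⟩ := hslack
  obtain ⟨T, hT⟩ : ∃ T : ℕ → ℝ, T = fun n =>
      c * γ 0 / δ 0 + ∑ i ∈ Finset.range n, c * (γ (i+1) - γ i) / δ (i+1) :=
    ⟨_, rfl⟩
  have hTsucc : ∀ n, T (n+1) = T n + c * (γ (n+1) - γ n) / δ (n+1) := by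
    intro n
    simp only [hT, Finset.sum_range_succ]
    ring
  -- telescoping difference
  have hdiff : ∀ j k, j ≤ k →
      T k - T j = ∑ i ∈ Finset.Ico j k, c * (γ (i+1) - γ i) / δ (i+1) := by
    intro j k hjk
    simp only [hT]
    rw [Finset.sum_Ico_eq_sub _ hjk]
    ring
  -- telescoping with a constant denominator
  have htel : ∀ j k (d : ℝ), j ≤ k →
      ∑ i ∈ Finset.Ico j k, c * (γ (i+1) - γ i) / d = c * (γ k - γ j) / d := by
    intro j k d hjk
    have hsum : ∑ i ∈ Finset.Ico j k, (γ (i+1) - γ i) = γ k - γ j := by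
      rw [Finset.sum_Ico_eq_sub _ hjk, Finset.sum_range_sub, Finset.sum_range_sub]
      ring
    calc ∑ i ∈ Finset.Ico j k, c * (γ (i+1) - γ i) / d
        = (∑ i ∈ Finset.Ico j k, (γ (i+1) - γ i)) * (c / d) := by
          rw [Finset.sum_mul]; apply Finset.sum_congr rfl; intro i _; ring
      _ = c * (γ k - γ j) / d := by rw [hsum]; ring
  have hδle : ∀ j k, j ≤ k → k < K → δ j ≤ δ k := by
    intro j k hjk hkK
    rcases eq_or_lt_of_le hjk with h | h
    · rw [h]
    · exact le_of_lt (hδmono j k h hkK)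
  -- lower bound : T k - T j ≥ c (γ k - γ j) / δ k  for j ≤ k < K
  have hLB : ∀ j k, j ≤ k → k < K → c * (γ k - γ j) / δ k ≤ T k - T j := by
    intro j k hjk hkK
    rw [hdiff j k hjk, ← htel j k (δ k) hjk]
    apply Finset.sum_le_sum
    intro i hi
    simp only [Finset.mem_Ico] at hi
    have hi1k : i + 1 ≤ k := hi.2
    have hi1K : i + 1 < K := lt_of_le_of_lt hi1k hkK
    have hiK : i < K := lt_trans (Nat.lt_succ_self i) hi1K
    have hnum : 0 ≤ c * (γ (i+1) - γ i) := by
      have := hγmono i (i+1) (Nat.le_succ i) hi1K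
      nlinarith
    have h1 : 0 < δ (i + 1) := hδpos _ hi1K
    have h2 : δ (i + 1) ≤ δ k := hδle _ _ hi1k hkK
    exact div_le_div_of_nonneg_left hnum h1 h2
  -- upper bound : T k - T j ≤ c (γ k - γ j) / δ j  for j ≤ k < K
  have hUB : ∀ j k, j ≤ k → k < K → T k - T j ≤ c * (γ k - γ j) / δ j := by
    intro j k hjk hkK
    rw [hdiff j k hjk, ← htel j k (δ j) hjk]
    apply Finset.sum_le_sum
    intro i hi
    simp only [Finset.mem_Ico] at hi
    have hi1K : i + 1 < K := lt_of_le_of_lt hi.2 hkK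
    have hnum : 0 ≤ c * (γ (i+1) - γ i) := by
      have := hγmono i (i+1) (Nat.le_succ i) hi1K
      nlinarith
    have h1 : 0 < δ j := hδpos _ (lt_of_le_of_lt hjk hkK)
    have h2 : δ j ≤ δ (i + 1) := hδle _ _ (Nat.le_succ_of_le hi.1) hi1K
    exact div_le_div_of_nonneg_left hnum h1 h2
  -- IC for the new menu
  have hIC' : ∀ k j, k < K → j < K →
      T k - c * γ k / δ k ≥ T j - c * γ j / δ k := by
    intro k j hkK hjK
    rcases le_total j k with h | h
    · have := hLB j k h hkK
      have hd : δ k ≠ 0 := ne_of_gt (hδpos k hkK)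
      have : c * γ k / δ k - c * γ j / δ k ≤ T k - T j := by
        calc c * γ k / δ k - c * γ j / δ k = c * (γ k - γ j) / δ k := by ring
          _ ≤ T k - T j := this
      linarith
    · have := hUB k j h hjK
      have : T j - T k ≤ c * (γ j - γ k) / δ k := this
      have heq : c * (γ j - γ k) / δ k = c * γ j / δ k - c * γ k / δ k := by ring
      linarith
  -- IR for the new menu
  have hIR' : ∀ k, k < K → T k - c * γ k / δ k ≥ 0 := by
    intro k hkK
    have h0K : 0 < K := hK
    have := hIC' k 0 hkK h0K
    have hT0 : T 0 = c * γ 0 / δ 0 := by simp [hT]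
    have hδ0 : 0 < δ 0 := hδpos 0 h0K
    have hδk : 0 < δ k := hδpos k hkK
    have hδ0k : δ 0 ≤ δ k := hδle 0 k (Nat.zero_le k) hkK
    have hγ00 : 0 ≤ γ 0 := hγ0 0 h0K
    have hnn : 0 ≤ c * γ 0 := by positivity
    have : c * γ 0 / δ k ≤ c * γ 0 / δ 0 := div_le_div_of_nonneg_left hnn hδ0 hδ0k
    linarith [hIC' k 0 hkK h0K]
  -- pointwise smaller transfers
  have hle : ∀ k, k < K → T k ≤ t k := by
    intro k
    induction k with
    | zero =>
      intro h0K
      have := hIR 0 h0K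
      simp only [hT, Finset.range_zero, Finset.sum_empty, add_zero]
      linarith
    | succ n ih =>
      intro hnK
      have hn : n < K := lt_trans (Nat.lt_succ_self n) hnK
      have h1 := hIC (n+1) n hnK hn
      have h2 : c * (γ (n+1) - γ n) / δ (n+1) =
          c * γ (n+1) / δ (n+1) - c * γ n / δ (n+1) := by ring
      rw [hTsucc n]
      have h3 := ih hn
      nlinarith [h1, h2, h3]
  -- strict inequality at the slack index
  have hstrict : T m < t m := by
    have hmm : m - 1 + 1 = m := Nat.succ_pred_eq_of_pos hm1
    have hm1K : m - 1 < K := lt_of_le_of_lt (Nat.sub_le m 1) hmK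
    have hTm : T m = T (m-1) + c * (γ m - γ (m-1)) / δ m := by
      conv_lhs => rw [← hmm]
      rw [hTsucc (m-1), hmm]
    have h3 := hle (m-1) hm1K
    have h4 : c * (γ m - γ (m-1)) / δ m =
        c * γ m / δ m - c * γ (m-1) / δ m := by ring
    rw [hTm]
    nlinarith [h3, h4, hmslack]
  refine ⟨T, hIC', hIR', hle, ⟨m, hmK, hstrict⟩, ?_⟩
  intro k hk1 hkK
  have hkk : k - 1 + 1 = k := Nat.succ_pred_eq_of_pos hk1
  conv_lhs => rw [← hkk]
  rw [hTsucc (k-1), hkk]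
  ring
end
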